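/- Let X be a Banach space, B a unital Banach algebra, and ψ : B(X) → B a continuous, surjective, non-injective algebra homomorphism. Then ψ maps the ideal of inessential operators E(X) into the Jacobson radical of B. In particular, if B is semisimple then E(X) ⊆ Ker(ψ). -/

import Mathlib

open Function

/-- An operator is Fredholm if its kernel is finite-dimensional and its range is
finite-codimensional. -/
def IsFredholmOp {X : Type*} [NormedAddCommGroup X] [NormedSpace ℂ X]
    (f : X →L[ℂ] X) : Prop :=
  FiniteDimensional ℂ (LinearMap.ker (f : X →ₗ[ℂ] X)) ∧
    FiniteDimensional ℂ (X ⧸ LinearMap.range (f : X →ₗ[ℂ] X))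

/-- An operator `T` is inessential if `I + S * T` is Fredholm for every `S`. -/
def IsInessentialOp {X : Type*} [NormedAddCommGroup X] [NormedSpace ℂ X]
    (T : X →L[ℂ] X) : Prop :=
  ∀ S : X →L[ℂ] X, IsFredholmOp (1 + S * T)

/-- Jacobson radical membership via quasi-regularity (noncommutative, left ideals). -/
theorem mem_jacobson_bot_of_isUnit {B : Type*} [Ring B] (x : B)
    (h : ∀ y : B, IsUnit (1 + y * x)) : x ∈ Ideal.jacobson (⊥ : Ideal B) := by
  rw [Ideal.jacobson, Ideal.mem_sInf]
  rintro J ⟨-, hJ⟩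
  by_contra hx
  have hxmem : x ∈ J ⊔ Ideal.span {x} :=
    Submodule.mem_sup_right (Ideal.subset_span (Set.mem_singleton x))
  have hlt : J < J ⊔ Ideal.span {x} :=
    lt_of_le_of_ne le_sup_left (fun hEq => hx (hEq ▸ hxmem))
  have htop : J ⊔ Ideal.span {x} = ⊤ := hJ.1.2 _ hlt
  have h1 : (1 : B) ∈ J ⊔ Ideal.span {x} := by rw [htop]; trivial
  obtain ⟨j, hj, r, hr, hsum⟩ := Submodule.mem_sup.mp h1
  obtain ⟨a, ha⟩ := Submodule.mem_span_singleton.mp hr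
  have hju : IsUnit j := by
    have : j = 1 + (-a) * x := by
      have hj1 : j = 1 - r := eq_sub_of_add_eq hsum
      rw [hj1, ← ha, smul_eq_mul, neg_mul, ← sub_eq_add_neg]
    rw [this]; exact h (-a)
  exact hJ.ne_top (J.eq_top_of_isUnit_mem hj hju)

/-- A non-injective algebra homomorphism from `B(X)` kills every rank-one operator. -/
theorem psi_smulRight_eq_zero {X B : Type*} [NormedAddCommGroup X] [NormedSpace ℂ X]
    [CompleteSpace X] [Ring B] [Algebra ℂ B]
    (ψ : (X →L[ℂ] X) →ₐ[ℂ] B) (hninj : ¬ Injective ψ)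
    (φ : X →L[ℂ] ℂ) (u : X) : ψ (φ.smulRight u) = 0 := by
  obtain ⟨a, b, hab, hne⟩ := Function.not_injective_iff.mp hninj
  set T₀ : X →L[ℂ] X := a - b with hT₀def
  have hT₀ : ψ T₀ = 0 := by rw [hT₀def, map_sub, hab, sub_self]
  have hT₀ne : T₀ ≠ 0 := sub_ne_zero.mpr hne
  obtain ⟨x₀, hx₀⟩ : ∃ x₀, T₀ x₀ ≠ 0 := by
    by_contra hall
    push_neg at hall
    exact hT₀ne (ContinuousLinearMap.ext fun x => by simp [hall x])
  obtain ⟨g, -, hg⟩ := exists_dual_vector ℂ (T₀ x₀) (norm_ne_zero_iff.mpr hx₀)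
  set γ : X →L[ℂ] ℂ := ((‖T₀ x₀‖ : ℂ)⁻¹) • g with hγdef
  have hγx : γ (T₀ x₀) = 1 := by
    rw [hγdef]
    simp only [ContinuousLinearMap.smul_apply, hg, smul_eq_mul]
    exact inv_mul_cancel₀ (by exact_mod_cast norm_ne_zero_iff.mpr hx₀)
  have key : (γ.smulRight u) * T₀ * (φ.smulRight x₀) = φ.smulRight u := by
    ext x
    simp only [ContinuousLinearMap.mul_apply, ContinuousLinearMap.smulRight_apply,
      map_smul, smul_eq_mul, hγx]
    rw [smul_smul, mul_one]
  calc ψ (φ.smulRight u) = ψ (γ.smulRight u) * ψ T₀ * ψ (φ.smulRight x₀) := by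
        rw [← map_mul, ← map_mul, key]
    _ = 0 := by rw [hT₀, mul_zero, zero_mul]

/-- A non-injective algebra homomorphism from `B(X)` kills every finite-rank operator. -/
theorem psi_finiteRank_eq_zero {X B : Type*} [NormedAddCommGroup X] [NormedSpace ℂ X]
    [CompleteSpace X] [Ring B] [Algebra ℂ B]
    (ψ : (X →L[ℂ] X) →ₐ[ℂ] B) (hninj : ¬ Injective ψ)
    (R : X →L[ℂ] X) (hR : FiniteDimensional ℂ (LinearMap.range (R : X →ₗ[ℂ] X))) :
    ψ R = 0 := by
  set V := LinearMap.range (R : X →ₗ[ℂ] X) with hVdef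
  haveI : FiniteDimensional ℂ V := hR
  let b := Module.finBasis ℂ V
  let Rres : X →L[ℂ] V := R.codRestrict V (fun x => LinearMap.mem_range_self _ x)
  let c : Fin (Module.finrank ℂ V) → (X →L[ℂ] ℂ) := fun i =>
    (LinearMap.toContinuousLinearMap (b.coord i)).comp Rres
  have hRdecomp : R = ∑ i, (c i).smulRight ((b i : X)) := by
    ext x
    have h1 : R x = ((Rres x : V) : X) := rfl
    have h2 := b.sum_repr (Rres x)
    calc R x = ((Rres x : V) : X) := h1
      _ = ((∑ i, b.repr (Rres x) i • b i : V) : X) := by rw [h2]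
      _ = ∑ i, b.repr (Rres x) i • ((b i : X)) := by
          push_cast
          rfl
      _ = (∑ i, (c i).smulRight ((b i : X))) x := by
          simp only [ContinuousLinearMap.sum_apply, ContinuousLinearMap.smulRight_apply]
          rfl
  rw [hRdecomp, map_sum]
  exact Finset.sum_eq_zero fun i _ => psi_smulRight_eq_zero ψ hninj _ _

/-- Atkinson: a Fredholm operator is invertible modulo finite-rank operators. -/
theorem atkinson {X : Type*} [NormedAddCommGroup X] [NormedSpace ℂ X] [CompleteSpace X]
    (f : X →L[ℂ] X) (hf : IsFredholmOp f) :
    ∃ h : X →L[ℂ] X,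
      FiniteDimensional ℂ (LinearMap.range ((h * f - 1 : X →L[ℂ] X) : X →ₗ[ℂ] X)) ∧
      FiniteDimensional ℂ (LinearMap.range ((f * h - 1 : X →L[ℂ] X) : X →ₗ[ℂ] X)) := by
  obtain ⟨hK, hQ⟩ := hf
  set K := LinearMap.ker (f : X →ₗ[ℂ] X) with hKdef
  set R := LinearMap.range (f : X →ₗ[ℂ] X) with hRdef
  haveI : FiniteDimensional ℂ K := hK
  obtain ⟨M, hMclosed, hKM⟩ :=
    (Submodule.ClosedComplemented.of_finiteDimensional K).exists_isClosed_isCompl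
  obtain ⟨N, hRN⟩ := R.exists_isCompl
  haveI : FiniteDimensional ℂ (X ⧸ R) := hQ
  haveI : FiniteDimensional ℂ N := (R.quotientEquivOfIsCompl N hRN).finiteDimensional
  haveI : CompleteSpace M := hMclosed.completeSpace_coe
  set g : (M × N) →L[ℂ] X := (f.comp M.subtypeL).coprod N.subtypeL with hgdef
  have hgapp : ∀ p : M × N, g p = f (p.1 : X) + (p.2 : X) := fun p => rfl
  have hginj : LinearMap.ker (g : (M × N) →ₗ[ℂ] X) = ⊥ := by
    rw [LinearMap.ker_eq_bot']
    rintro ⟨m, n⟩ hmn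
    change g (m, n) = 0 at hmn
    rw [hgapp] at hmn
    have hfm : f (m : X) = -(n : X) := by
      have := eq_neg_of_add_eq_zero_left hmn
      exact this
    have hfmR : f (m : X) ∈ R := LinearMap.mem_range_self _ _
    have hnN : -(n : X) ∈ N := neg_mem n.2
    have hz : f (m : X) = 0 :=
      Submodule.disjoint_def.mp hRN.disjoint _ hfmR (by rw [hfm]; exact hnN)
    have hn0 : (n : X) = 0 := by
      have : -(n : X) = 0 := hfm ▸ hz
      simpa using this
    have hmK : (m : X) ∈ K := hz
    have hm0 : (m : X) = 0 := Submodule.disjoint_def.mp hKM.disjoint _ hmK m.2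
    ext
    · exact hm0
    · exact hn0
  have hgsurj : LinearMap.range (g : (M × N) →ₗ[ℂ] X) = ⊤ := by
    rw [LinearMap.range_eq_top]
    intro x
    have hx : x ∈ R ⊔ N := by rw [hRN.sup_eq_top]; trivial
    obtain ⟨r, hrR, n, hnN, hrn⟩ := Submodule.mem_sup.mp hx
    obtain ⟨z, hz⟩ := hrR
    have hzKM : z ∈ K ⊔ M := by rw [hKM.sup_eq_top]; trivial
    obtain ⟨k, hkK, m, hmM, hkm⟩ := Submodule.mem_sup.mp hzKM
    refine ⟨(⟨m, hmM⟩, ⟨n, hnN⟩), ?_⟩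
    change g (⟨m, hmM⟩, ⟨n, hnN⟩) = x
    rw [hgapp]
    have hk0 : f k = 0 := hkK
    have hfz : f z = f m := by
      have h3 : f z = f k + f m := by rw [← hkm]; exact map_add f k m
      rw [h3, hk0, zero_add]
    have hz' : f z = r := hz
    show f (m : X) + n = x
    rw [← hfz, hz', hrn]
  set e := ContinuousLinearEquiv.ofBijective g hginj hgsurj with hedef
  have heapp : ∀ p : M × N, e p = f (p.1 : X) + (p.2 : X) := fun p => hgapp p
  set h : X →L[ℂ] X :=
    M.subtypeL.comp ((ContinuousLinearMap.fst ℂ M N).comp e.symm.toContinuousLinearMap)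
    with hhdef
  have hhapp : ∀ x : X, h x = ((e.symm x).1 : X) := fun x => rfl
  have hkey : ∀ x : X, f (h x) + ((e.symm x).2 : X) = x := by
    intro x
    have := heapp (e.symm x)
    rw [e.apply_symm_apply] at this
    rw [hhapp]
    exact this.symm
  refine ⟨h, ?_, ?_⟩
  · -- range (h * f - 1) ⊆ K
    have hle : LinearMap.range ((h * f - 1 : X →L[ℂ] X) : X →ₗ[ℂ] X) ≤ K := by
      rintro y ⟨x, rfl⟩
      have hxKM : x ∈ K ⊔ M := by rw [hKM.sup_eq_top]; trivial
      obtain ⟨k, hkK, m, hmM, hkm⟩ := Submodule.mem_sup.mp hxKM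
      have hk0 : f k = 0 := hkK
      have hfx : f x = f m := by
        have h3 : f x = f k + f m := by rw [← hkm]; exact map_add f k m
        rw [h3, hk0, zero_add]
      have hsymm : e.symm (f x) = (⟨m, hmM⟩, 0) := by
        apply e.injective
        rw [e.apply_symm_apply, heapp]
        simp [hfx]
      have happ : ((h * f - 1 : X →L[ℂ] X) : X →ₗ[ℂ] X) x = h (f x) - x := by
        simp [ContinuousLinearMap.mul_apply]
      rw [happ, hhapp, hsymm]
      have : (m : X) - x = -k := by rw [← hkm]; abel
      simpa [this] using neg_mem hkK
    exact Submodule.finiteDimensional_of_le hle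
  · -- range (f * h - 1) ⊆ N
    have hle : LinearMap.range ((f * h - 1 : X →L[ℂ] X) : X →ₗ[ℂ] X) ≤ N := by
      rintro y ⟨x, rfl⟩
      have happ : ((f * h - 1 : X →L[ℂ] X) : X →ₗ[ℂ] X) x = f (h x) - x := by
        simp [ContinuousLinearMap.mul_apply]
      rw [happ]
      have h4 : f (h x) = x - ((e.symm x).2 : X) := eq_sub_of_add_eq (hkey x)
      have h5 : f (h x) - x = -((e.symm x).2 : X) := by rw [h4]; abel
      rw [h5]
      exact neg_mem (e.symm x).2.2
    exact Submodule.finiteDimensional_of_le hle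

theorem inessential_mapsTo_jacobson
    {X B : Type*} [NormedAddCommGroup X] [NormedSpace ℂ X] [CompleteSpace X]
    [NormedRing B] [NormedAlgebra ℂ B] [CompleteSpace B]
    (ψ : (X →L[ℂ] X) →ₐ[ℂ] B) (hcont : Continuous ψ)
    (hsurj : Surjective ψ) (hninj : ¬ Injective ψ) :
    (∀ T : X →L[ℂ] X, IsInessentialOp T → ψ T ∈ Ideal.jacobson (⊥ : Ideal B)) ∧
      (Ideal.jacobson (⊥ : Ideal B) = ⊥ →
        ∀ T : X →L[ℂ] X, IsInessentialOp T → ψ T = 0) := by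
  have main : ∀ T : X →L[ℂ] X, IsInessentialOp T → ψ T ∈ Ideal.jacobson (⊥ : Ideal B) := by
    intro T hT
    apply mem_jacobson_bot_of_isUnit
    intro y
    obtain ⟨S, rfl⟩ := hsurj y
    have hψf : (1 : B) + ψ S * ψ T = ψ (1 + S * T) := by
      rw [map_add, map_one, map_mul]
    rw [hψf]
    obtain ⟨h, h1, h2⟩ := atkinson (1 + S * T) (hT S)
    set f : X →L[ℂ] X := 1 + S * T
    have e1 : ψ h * ψ f = 1 := by
      have hz : ψ (h * f - 1) = 0 := psi_finiteRank_eq_zero ψ hninj _ h1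
      calc ψ h * ψ f = ψ (h * f) := (map_mul ψ h f).symm
        _ = ψ ((h * f - 1) + 1) := by rw [sub_add_cancel]
        _ = ψ (h * f - 1) + 1 := by rw [map_add, map_one]
        _ = 1 := by rw [hz, zero_add]
    have e2 : ψ f * ψ h = 1 := by
      have hz : ψ (f * h - 1) = 0 := psi_finiteRank_eq_zero ψ hninj _ h2
      calc ψ f * ψ h = ψ (f * h) := (map_mul ψ f h).symm
        _ = ψ ((f * h - 1) + 1) := by rw [sub_add_cancel]
        _ = ψ (f * h - 1) + 1 := by rw [map_add, map_one]
        _ = 1 := by rw [hz, zero_add]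
    exact ⟨⟨ψ f, ψ h, e2, e1⟩, rfl⟩
  refine ⟨main, fun hsemi T hT => ?_⟩
  have := main T hT
  rw [hsemi] at this
  simpa using this
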